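/- Let G be a homogeneous torsion-free transitive abelian group. Then for every index set I with at least two elements, the product ∏_{i∈I} G of copies of G is transitive. -/

import Mathlib

/-- `n` divides `x` in the group `G`. -/
def Divides {G : Type*} [AddCommGroup G] (n : ℕ) (x : G) : Prop :=
  ∃ z : G, n • z = x

/-- `χ(x) ≤ χ(y)`: every prime-power dividing `x` divides `y`. -/
def HeightLE {G H : Type*} [AddCommGroup G] [AddCommGroup H] (x : G) (y : H) : Prop :=
  ∀ p k : ℕ, p.Prime → Divides (p ^ k) x → Divides (p ^ k) y

/-- `χ(x) = χ(y)`. -/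
def HeightEq {G H : Type*} [AddCommGroup G] [AddCommGroup H] (x : G) (y : H) : Prop :=
  HeightLE x y ∧ HeightLE y x

def FullyTransitive (G : Type*) [AddCommGroup G] : Prop :=
  ∀ x y : G, HeightLE x y → ∃ φ : G →+ G, φ x = y

def KrylovTransitive (G : Type*) [AddCommGroup G] : Prop :=
  ∀ x y : G, HeightEq x y → ∃ φ : G →+ G, φ x = y

def TransitiveGrp (G : Type*) [AddCommGroup G] : Prop :=
  ∀ x y : G, HeightEq x y → ∃ φ : G ≃+ G, φ x = y

def WeaklyTransitive (G : Type*) [AddCommGroup G] : Prop :=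
  ∀ (x y : G) (φ ψ : G →+ G), φ x = y → ψ y = x → ∃ η : G ≃+ G, η x = y

def IsTorsionFreeGrp (G : Type*) [AddCommGroup G] : Prop :=
  ∀ (n : ℤ) (x : G), n ≠ 0 → n • x = 0 → x = 0

/-- `τ(x) ≤ τ(y)`. -/
def TypeLE {G H : Type*} [AddCommGroup G] [AddCommGroup H] (x : G) (y : H) : Prop :=
  ∃ n : ℤ, n ≠ 0 ∧ HeightLE x (n • y)

/-- `τ(x) = τ(y)`. -/
def TypeEq {G H : Type*} [AddCommGroup G] [AddCommGroup H] (x : G) (y : H) : Prop :=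
  TypeLE x y ∧ TypeLE y x

def Homogeneous (G : Type*) [AddCommGroup G] : Prop :=
  ∀ x y : G, x ≠ 0 → y ≠ 0 → TypeEq x y

/-- `π(G)`: primes `p` with `pG ≠ G`. -/
def piSet (G : Type*) [AddCommGroup G] : Set ℕ :=
  {p | p.Prime ∧ ¬ ∀ x : G, ∃ z : G, p • z = x}


namespace Stmt7
noncomputable section
open Classical
set_option maxHeartbeats 1000000


open Classical

variable {G : Type*} [AddCommGroup G] {H : Type*} [AddCommGroup H]

lemma divides_mono {x : G} {p j k : ℕ} (hjk : j ≤ k)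
    (h : Divides (p ^ k) x) : Divides (p ^ j) x := by
  obtain ⟨z, hz⟩ := h
  exact ⟨p ^ (k - j) • z, by rw [smul_smul, ← pow_add, Nat.add_sub_cancel' hjk]; exact hz⟩

lemma divides_pow_zero (p : ℕ) (x : G) : Divides (p ^ 0) x :=
  ⟨x, by simp⟩

noncomputable def hgt (p : ℕ) (x : G) : ℕ∞ :=
  ⨆ k : {k : ℕ // Divides (p ^ k) x}, (k : ℕ∞)

lemma le_hgt_of_divides {p k : ℕ} {x : G} (h : Divides (p ^ k) x) :
    (k : ℕ∞) ≤ hgt p x :=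
  le_iSup_of_le ⟨k, h⟩ le_rfl

lemma divides_of_le_hgt {p k : ℕ} {x : G} (hk : (k : ℕ∞) ≤ hgt p x) :
    Divides (p ^ k) x := by
  by_contra hnd
  have hk0 : k ≠ 0 := by
    rintro rfl; exact hnd (divides_pow_zero p x)
  have hb : ∀ j : {j : ℕ // Divides (p ^ j) x}, ((j : ℕ) : ℕ∞) ≤ ((k - 1 : ℕ) : ℕ∞) := by
    rintro ⟨j, hj⟩
    have : j ≤ k - 1 := by
      by_contra hlt
      push_neg at hlt
      exact hnd (divides_mono (by omega) hj)
    exact_mod_cast this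
  have : hgt p x ≤ ((k - 1 : ℕ) : ℕ∞) := iSup_le hb
  have hlt : ((k - 1 : ℕ) : ℕ∞) < (k : ℕ∞) := by
    exact_mod_cast Nat.sub_lt (Nat.pos_of_ne_zero hk0) one_pos
  exact absurd (hk.trans this) (not_le.2 hlt)

lemma divides_iff_le_hgt {p k : ℕ} {x : G} :
    Divides (p ^ k) x ↔ (k : ℕ∞) ≤ hgt p x :=
  ⟨le_hgt_of_divides, divides_of_le_hgt⟩

lemma enat_le_of_forall_nat (a b : ℕ∞)
    (h : ∀ k : ℕ, (k : ℕ∞) ≤ a → (k : ℕ∞) ≤ b) : a ≤ b := by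
  cases a with
  | top =>
    have : b = ⊤ := by
      by_contra hb
      obtain ⟨m, rfl⟩ : ∃ m : ℕ, b = (m : ℕ∞) := by
        cases b with
        | top => exact absurd rfl hb
        | coe m => exact ⟨m, rfl⟩
      have := h (m + 1) le_top
      exact absurd this (by exact_mod_cast Nat.not_succ_le_self m)
    simp [this]
  | coe n => exact h n le_rfl

lemma hgt_eq_top_iff {p : ℕ} {x : G} :
    hgt p x = ⊤ ↔ ∀ k : ℕ, Divides (p ^ k) x := by
  constructor
  · intro h k
    exact divides_of_le_hgt (by simp [h])
  · intro h
    refine top_le_iff.1 (enat_le_of_forall_nat ⊤ _ ?_)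
    intro k _
    exact le_hgt_of_divides (h k)

lemma hgt_zero_elt (p : ℕ) : hgt p (0 : G) = ⊤ :=
  hgt_eq_top_iff.2 fun k => ⟨0, smul_zero _⟩

lemma heightLE_iff_hgt {x : G} {y : H} :
    HeightLE x y ↔ ∀ p : ℕ, p.Prime → hgt p x ≤ hgt p y := by
  constructor
  · intro h p hp
    refine enat_le_of_forall_nat _ _ fun k hk => ?_
    exact le_hgt_of_divides (h p k hp (divides_of_le_hgt hk))
  · intro h p k hp hd
    exact divides_of_le_hgt ((le_hgt_of_divides hd).trans (h p hp))

lemma heightEq_iff_hgt {x : G} {y : H} :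
    HeightEq x y ↔ ∀ p : ℕ, p.Prime → hgt p x = hgt p y := by
  constructor
  · rintro ⟨h1, h2⟩ p hp
    exact le_antisymm (heightLE_iff_hgt.1 h1 p hp) (heightLE_iff_hgt.1 h2 p hp)
  · intro h
    exact ⟨heightLE_iff_hgt.2 fun p hp => (h p hp).le,
      heightLE_iff_hgt.2 fun p hp => (h p hp).ge⟩

lemma divides_map (f : G →+ H) {n : ℕ} {x : G} (h : Divides n x) : Divides n (f x) := by
  obtain ⟨z, hz⟩ := h
  exact ⟨f z, by rw [← map_nsmul, hz]⟩

lemma hgt_map_le (f : G →+ H) (p : ℕ) (x : G) : hgt p x ≤ hgt p (f x) :=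
  enat_le_of_forall_nat _ _ fun _ hk =>
    le_hgt_of_divides (divides_map f (divides_of_le_hgt hk))

lemma hgt_equiv (φ : G ≃+ H) (p : ℕ) (x : G) : hgt p (φ x) = hgt p x := by
  refine le_antisymm ?_ (hgt_map_le φ.toAddMonoidHom p x)
  have := hgt_map_le φ.symm.toAddMonoidHom p (φ x)
  simpa using this

lemma hgt_neg (p : ℕ) (x : G) : hgt p (-x) = hgt p x := by
  have := hgt_equiv (AddEquiv.neg G) p x
  simpa using this

lemma min_le_hgt_add (p : ℕ) (x y : G) :
    min (hgt p x) (hgt p y) ≤ hgt p (x + y) := by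
  refine enat_le_of_forall_nat _ _ fun k hk => ?_
  have hx : Divides (p ^ k) x := divides_of_le_hgt (hk.trans (min_le_left _ _))
  have hy : Divides (p ^ k) y := divides_of_le_hgt (hk.trans (min_le_right _ _))
  obtain ⟨zx, hzx⟩ := hx; obtain ⟨zy, hzy⟩ := hy
  exact le_hgt_of_divides ⟨zx + zy, by rw [smul_add, hzx, hzy]⟩

lemma hgt_add_eq_left {p : ℕ} {x y : G} (h : hgt p x < hgt p y) :
    hgt p (x + y) = hgt p x := by
  refine le_antisymm ?_ (by simpa [min_eq_left h.le] using min_le_hgt_add p x y)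
  by_contra hlt
  push_neg at hlt
  have h1 : min (hgt p (x + y)) (hgt p y) ≤ hgt p x := by
    have := min_le_hgt_add p (x + y) (-y)
    simpa [hgt_neg] using this
  rcases le_total (hgt p (x+y)) (hgt p y) with hc | hc
  · rw [min_eq_left hc] at h1; exact absurd h1 (not_le.2 hlt)
  · rw [min_eq_right hc] at h1; exact absurd h1 (not_le.2 h)








lemma enat_le_of_add_right {a b : ℕ∞} {c : ℕ} (h : a + (c : ℕ∞) ≤ b + (c : ℕ∞)) :
    a ≤ b := by
  cases b with
  | top => simp
  | coe m =>
    cases a with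
    | top =>
      exfalso
      rw [top_add] at h
      have : ((m : ℕ) : ℕ∞) + (c : ℕ∞) = (((m + c : ℕ)) : ℕ∞) := by push_cast; rfl
      rw [this] at h
      exact (ENat.coe_ne_top _) (top_le_iff.1 h)
    | coe k =>
      have : ((k + c : ℕ) : ℕ∞) ≤ ((m + c : ℕ) : ℕ∞) := by push_cast; exact h
      have : k + c ≤ m + c := by exact_mod_cast this
      exact_mod_cast (by omega : k ≤ m)

section TF
variable (hTF : IsTorsionFreeGrp G)
include hTF

lemma tf_cancel {n : ℤ} (hn : n ≠ 0) {a b : G} (h : n • a = n • b) : a = b := by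
  have : n • (a - b) = 0 := by rw [smul_sub, h, sub_self]
  exact sub_eq_zero.1 (hTF n (a - b) hn this)

lemma tf_cancel_nat {n : ℕ} (hn : n ≠ 0) {a b : G} (h : n • a = n • b) : a = b := by
  refine tf_cancel hTF (n := (n : ℤ)) (by exact_mod_cast hn) ?_
  simpa [natCast_zsmul] using h

/-- Bezout in the group: if `u • z = m • w` with `u, m` coprime then `m ∣ z`. -/
lemma divides_of_coprime_smul {u m : ℕ} (hco : Nat.Coprime u m) {z w : G}
    (h : u • z = m • w) : ∃ z' : G, m • z' = z := by
  have hico : IsCoprime (u : ℤ) (m : ℤ) := Int.isCoprime_iff_gcd_eq_one.2 hco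
  obtain ⟨α, β, hαβ⟩ := hico
  refine ⟨α • w + β • z, ?_⟩
  have hz : (u : ℤ) • z = (m : ℤ) • w := by
    rw [natCast_zsmul, natCast_zsmul, h]
  have key : (m : ℤ) • (α • w + β • z) = z := by
    calc (m : ℤ) • (α • w + β • z)
        = α • ((m : ℤ) • w) + β • ((m : ℤ) • z) := by
          rw [smul_add, smul_comm ((m:ℤ)) α, smul_comm ((m:ℤ)) β]
      _ = α • ((u : ℤ) • z) + β • ((m : ℤ) • z) := by rw [hz]
      _ = (α * u + β * m) • z := by rw [smul_smul, smul_smul, add_smul]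
      _ = z := by rw [hαβ, one_smul]
  rw [natCast_zsmul] at key
  exact key

lemma hgt_nsmul_eq {p : ℕ} (hp : p.Prime) {n : ℕ} (hn : n ≠ 0) (x : G) :
    hgt p (n • x) = hgt p x + (n.factorization p : ℕ∞) := by
  set a := n.factorization p with ha
  set u := n / p ^ a with hu
  have hpu : ¬ p ∣ u := Nat.not_dvd_ordCompl hp hn
  have hnn : p ^ a * u = n := Nat.ordProj_mul_ordCompl_eq_self n p
  have claimA : ∀ k : ℕ, Divides (p ^ k) x → Divides (p ^ (k + a)) (n • x) := by
    rintro k ⟨z, hz⟩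
    refine ⟨u • z, ?_⟩
    rw [smul_smul, ← hz, smul_smul]
    congr 1
    rw [← hnn]; ring
  have claimB : ∀ j : ℕ, Divides (p ^ j) (n • x) → Divides (p ^ (j - a)) x := by
    rintro j ⟨w, hw⟩
    rcases le_or_gt j a with hja | haj
    · have : j - a = 0 := by omega
      rw [this]; exact ⟨x, by simp⟩
    · have hsplit : p ^ j = p ^ a * p ^ (j - a) := by
        rw [← pow_add]; congr 1; omega
      have h1 : (p ^ a) • ((p ^ (j - a)) • w) = (p ^ a) • (u • x) := by
        rw [smul_smul, ← hsplit, hw, smul_smul, hnn]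
      have h2 : (p ^ (j - a)) • w = u • x :=
        tf_cancel_nat hTF (pow_ne_zero a hp.pos.ne') h1
      have hco : Nat.Coprime u (p ^ (j - a)) :=
        (Nat.Prime.coprime_iff_not_dvd hp).2 hpu |>.symm.pow_right _
      obtain ⟨z', hz'⟩ := divides_of_coprime_smul hTF hco h2.symm
      exact ⟨z', hz'⟩
  refine le_antisymm ?_ ?_
  · refine enat_le_of_forall_nat _ _ fun j hj => ?_
    have hd := claimB j (divides_of_le_hgt hj)
    have : ((j - a : ℕ) : ℕ∞) ≤ hgt p x := le_hgt_of_divides hd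
    calc (j : ℕ∞) ≤ ((j - a : ℕ) : ℕ∞) + (a : ℕ∞) := by
          rw [← Nat.cast_add]; exact_mod_cast (by omega : j ≤ (j - a) + a)
      _ ≤ hgt p x + a := by exact add_le_add_left this _
  · cases hx : hgt p x with
    | top =>
      have hall : ∀ k, Divides (p ^ k) x := hgt_eq_top_iff.1 hx
      have : hgt p (n • x) = ⊤ := hgt_eq_top_iff.2 fun k =>
        divides_mono (Nat.le_add_right k a) (claimA k (hall k))
      simp [this]
    | coe m =>
      have hd : Divides (p ^ m) x := divides_of_le_hgt (by rw [hx])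
      have h2 := le_hgt_of_divides (claimA m hd)
      push_cast at h2
      exact h2

lemma hgt_zsmul_eq {p : ℕ} (hp : p.Prime) {n : ℤ} (hn : n ≠ 0) (x : G) :
    hgt p (n • x) = hgt p x + (n.natAbs.factorization p : ℕ∞) := by
  have hna : n.natAbs ≠ 0 := Int.natAbs_ne_zero.2 hn
  rcases Int.natAbs_eq n with h | h
  · conv_lhs => rw [h]
    rw [natCast_zsmul, hgt_nsmul_eq hTF hp hna]
  · conv_lhs => rw [h]
    rw [neg_smul, natCast_zsmul, hgt_neg, hgt_nsmul_eq hTF hp hna]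

/-- iterated division with height hypothesis -/
lemma exists_div {N : ℕ} (hN : N ≠ 0) {a : G}
    (h : ∀ p, p.Prime → (N.factorization p : ℕ∞) ≤ hgt p a) :
    ∃ z, N • z = a := by
  induction N using Nat.strong_induction_on generalizing a with
  | _ N ih =>
  rcases eq_or_ne N 1 with rfl | hN1
  · exact ⟨a, one_smul _ _⟩
  · have hN2 : 2 ≤ N := by omega
    set p := N.minFac with hp
    have hpp : p.Prime := Nat.minFac_prime hN1
    have hpd : p ∣ N := Nat.minFac_dvd N
    obtain ⟨M, hM⟩ := hpd
    have hM0 : M ≠ 0 := by rintro rfl; simp at hM; omega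
    have hfact1 : 1 ≤ N.factorization p := by
      rw [hM]
      have : (N.factorization) p = (p.factorization p) + (M.factorization p) := by
        rw [hM, Nat.factorization_mul hpp.pos.ne' hM0]; simp
      rw [← hM, this]
      simp [hpp.factorization]
    have hd1 : Divides (p ^ 1) a := by
      apply divides_of_le_hgt
      calc ((1:ℕ) : ℕ∞) ≤ (N.factorization p : ℕ∞) := by exact_mod_cast hfact1
        _ ≤ hgt p a := h p hpp
    obtain ⟨z₁, hz₁⟩ := hd1
    rw [pow_one] at hz₁
    have hMlt : M < N := by
      rw [hM]
      exact lt_mul_of_one_lt_left (Nat.pos_of_ne_zero hM0) hpp.one_lt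
    have hz₁h : ∀ q, q.Prime → (M.factorization q : ℕ∞) ≤ hgt q z₁ := by
      intro q hq
      have heq : hgt q a = hgt q z₁ + (p.factorization q : ℕ∞) := by
        rw [← hz₁]; exact hgt_nsmul_eq hTF hq hpp.pos.ne' z₁
      have hNfac : N.factorization q = M.factorization q + p.factorization q := by
        rw [hM, Nat.factorization_mul hpp.pos.ne' hM0]; simp [add_comm]
      have hle := h q hq
      rw [heq, hNfac] at hle
      push_cast at hle
      exact enat_le_of_add_right hle
    obtain ⟨z, hz⟩ := ih M hMlt hM0 hz₁h
    exact ⟨z, by rw [hM, mul_smul, hz]; exact hz₁⟩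

omit hTF in
lemma strick {p : ℕ} {m : ℕ} {a w : G}
    (hw : hgt p w = (m : ℕ∞)) (ha : (m : ℕ∞) ≤ hgt p a) :
    hgt p (a + w) = (m : ℕ∞) ∨ hgt p (a + 2 • w) = (m : ℕ∞) := by
  rcases eq_or_ne (hgt p (a + w)) (m : ℕ∞) with h1 | h1
  · exact Or.inl h1
  · right
    have hge : (m : ℕ∞) ≤ hgt p (a + w) := by
      have := min_le_hgt_add p a w
      rw [hw] at this
      exact le_trans (le_min ha le_rfl) this
    have hlt : hgt p w < hgt p (a + w) := by
      rw [hw]; exact lt_of_le_of_ne hge (Ne.symm h1)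
    have : hgt p (w + (a + w)) = hgt p w := hgt_add_eq_left hlt
    rw [hw] at this
    rw [← this]
    congr 1
    rw [two_smul]; abel

end TF






section Pi
variable {I : Type*}

lemma divides_pi {x : I → G} {n : ℕ} : Divides n x ↔ ∀ i, Divides n (x i) := by
  constructor
  · rintro ⟨z, hz⟩ i
    exact ⟨z i, congrFun hz i⟩
  · intro h
    choose z hz using h
    exact ⟨z, funext hz⟩

lemma hgt_pi_le (p : ℕ) (x : I → G) (i : I) : hgt p x ≤ hgt p (x i) := by
  refine enat_le_of_forall_nat _ _ fun k hk => ?_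
  exact divides_iff_le_hgt.1 (divides_pi.1 (divides_iff_le_hgt.2 hk) i)

lemma hgt_pi_ge (p : ℕ) (x : I → G) (c : ℕ∞) (h : ∀ i, c ≤ hgt p (x i)) :
    c ≤ hgt p x := by
  refine enat_le_of_forall_nat _ _ fun k hk => ?_
  refine divides_iff_le_hgt.1 (divides_pi.2 fun i => divides_iff_le_hgt.2 (hk.trans (h i)))

lemma hgt_pi_attained {p : ℕ} {x : I → G} {m : ℕ} (h : hgt p x = (m : ℕ∞)) :
    ∃ i, hgt p (x i) = (m : ℕ∞) := by
  have hnd : ¬ Divides (p ^ (m + 1)) x := by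
    intro hd
    have := divides_iff_le_hgt.1 hd
    rw [h] at this
    exact absurd (by exact_mod_cast this : m + 1 ≤ m) (by omega)
  have : ¬ ∀ i, Divides (p ^ (m + 1)) (x i) := fun hh => hnd (divides_pi.2 hh)
  push_neg at this
  obtain ⟨i, hi⟩ := this
  refine ⟨i, le_antisymm ?_ (h ▸ hgt_pi_le p x i)⟩
  by_contra hlt
  push_neg at hlt
  have : ((m + 1 : ℕ) : ℕ∞) ≤ hgt p (x i) := by
    cases hxi : hgt p (x i) with
    | top => simp
    | coe k =>
      rw [hxi] at hlt
      have : m < k := by exact_mod_cast hlt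
      exact_mod_cast this
  exact hi (divides_iff_le_hgt.2 this)

lemma hgt_pi_finite_of_ne_top {p : ℕ} {x : I → G} (h : hgt p x ≠ ⊤) :
    ∃ m : ℕ, hgt p x = (m : ℕ∞) := by
  cases hx : hgt p x with
  | top => exact absurd hx h
  | coe m => exact ⟨m, rfl⟩

end Pi

/-- F0 : in a transitive group, fully divisible elements vanish -/
lemma eq_zero_of_all_divides (ht : TransitiveGrp G) {x : G}
    (h : ∀ p k : ℕ, p.Prime → Divides (p ^ k) x) : x = 0 := by
  have he : HeightEq (0 : G) x := by
    constructor
    · intro p k hp _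
      exact h p k hp
    · intro p k _ _
      exact ⟨0, smul_zero _⟩
  obtain ⟨φ, hφ⟩ := ht 0 x he
  rw [map_zero] at hφ
  exact hφ.symm

lemma exists_finite_hgt (ht : TransitiveGrp G) {x : G} (hx : x ≠ 0) :
    ∃ p : ℕ, p.Prime ∧ hgt p x ≠ ⊤ := by
  by_contra hc
  push_neg at hc
  refine hx (eq_zero_of_all_divides ht fun p k hp => ?_)
  exact hgt_eq_top_iff.1 (hc p hp) k

def nsmulHom (N : ℕ) : G →+ G where
  toFun := fun g => N • g
  map_zero' := smul_zero N
  map_add' := fun a b => smul_add N a b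

/-- F2 : full transitivity from homogeneity + transitivity -/
lemma f2 (hTF : IsTorsionFreeGrp G) (hhom : Homogeneous G) (ht : TransitiveGrp G)
    {u v : G} (hu : u ≠ 0) (hle : HeightLE u v) : ∃ f : G →+ G, f u = v := by
  rcases eq_or_ne v 0 with rfl | hv
  · exact ⟨0, rfl⟩
  obtain ⟨n, hn, hlev⟩ := (hhom v u hv hu).1
  set nn := n.natAbs with hnn
  have hnn0 : nn ≠ 0 := Int.natAbs_ne_zero.2 hn
  have hgap : ∀ q : ℕ, q.Prime → hgt q v ≤ hgt q u + (nn.factorization q : ℕ∞) := by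
    intro q hq
    have := heightLE_iff_hgt.1 hlev q hq
    rwa [hgt_zsmul_eq hTF hq hn] at this
  have hulev : ∀ q : ℕ, q.Prime → hgt q u ≤ hgt q v := heightLE_iff_hgt.1 hle
  -- the gap exponents
  classical
  let d : ℕ → ℕ := fun q => if hq : hgt q u = ⊤ then 0 else
    (hgt q v).toNat - (hgt q u).toNat
  set N : ℕ := ∏ q ∈ nn.primeFactors, q ^ d q with hN
  have hN0 : N ≠ 0 := by
    rw [hN]
    refine Finset.prod_ne_zero_iff.2 fun q hq => ?_
    exact pow_ne_zero _ (Nat.prime_of_mem_primeFactors hq).pos.ne'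
  have hNfac : ∀ q : ℕ, q.Prime →
      N.factorization q = if q ∈ nn.primeFactors then d q else 0 := by
    intro q hq
    rw [hN, Nat.factorization_prod (fun p hp => pow_ne_zero _
      (Nat.prime_of_mem_primeFactors hp).pos.ne')]
    rw [Finset.sum_apply']
    have : ∀ p ∈ nn.primeFactors, ((p ^ d p).factorization) q
        = if q = p then d p else 0 := by
      intro p hp
      rw [(Nat.prime_of_mem_primeFactors hp).factorization_pow]
      simp [Finsupp.single_apply, eq_comm]
    rw [Finset.sum_congr rfl this, Finset.sum_ite_eq nn.primeFactors q (fun p => d p)]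
  -- heights are finite where they matter
  have hfin : ∀ q : ℕ, q.Prime → hgt q u ≠ ⊤ → ∃ mu mv : ℕ,
      hgt q u = (mu : ℕ∞) ∧ hgt q v = (mv : ℕ∞) ∧ mu ≤ mv ∧
      mv ≤ mu + nn.factorization q := by
    intro q hq hqu
    cases hu' : hgt q u with
    | top => exact absurd hu' hqu
    | coe mu =>
      cases hv' : hgt q v with
      | top =>
        exfalso
        have := hgap q hq
        rw [hu', hv'] at this
        have : (⊤ : ℕ∞) ≤ ((mu + nn.factorization q : ℕ) : ℕ∞) := by
          push_cast; exact this
        exact (ENat.coe_ne_top _) (top_le_iff.1 this)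
      | coe mv =>
        refine ⟨mu, mv, rfl, rfl, ?_, ?_⟩
        · have := hulev q hq; rw [hu', hv'] at this; exact_mod_cast this
        · have := hgap q hq; rw [hu', hv'] at this
          have h2 : ((mv : ℕ) : ℕ∞) ≤ ((mu + nn.factorization q : ℕ) : ℕ∞) := by
            push_cast; exact this
          exact_mod_cast h2
  have hdiv : ∀ q, q.Prime → (N.factorization q : ℕ∞) ≤ hgt q v := by
    intro q hq
    rw [hNfac q hq]
    by_cases hmem : q ∈ nn.primeFactors
    · simp only [hmem, if_true]
      by_cases hqu : hgt q u = ⊤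
      · simp [d, hqu]
      · obtain ⟨mu, mv, h1, h2, h3, _⟩ := hfin q hq hqu
        have : d q = mv - mu := by simp [d, hqu, h1, h2]
        rw [this, h2]
        exact_mod_cast (by omega : mv - mu ≤ mv)
    · simp [hmem]
  obtain ⟨z, hz⟩ := exists_div hTF hN0 hdiv
  have hzu : ∀ q : ℕ, q.Prime → hgt q z = hgt q u := by
    intro q hq
    have hv2 : hgt q v = hgt q z + (N.factorization q : ℕ∞) := by
      rw [← hz]; exact hgt_nsmul_eq hTF hq hN0 z
    by_cases hqu : hgt q u = ⊤
    · -- then hgt q v = ⊤ and N.factorization finite, so hgt z = ⊤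
      have hvt : hgt q v = ⊤ := top_le_iff.1 (hqu ▸ hulev q hq)
      rw [hvt] at hv2
      rw [hqu]
      by_contra hzne
      cases hz' : hgt q z with
      | top => exact hzne (by rw [hz'])
      | coe mz =>
        rw [hz'] at hv2
        have : ((mz + N.factorization q : ℕ) : ℕ∞) = ⊤ := by push_cast; rw [← hv2]
        exact (ENat.coe_ne_top _) this
    · obtain ⟨mu, mv, h1, h2, h3, h4⟩ := hfin q hq hqu
      by_cases hmem : q ∈ nn.primeFactors
      · have hdq : d q = mv - mu := by simp [d, hqu, h1, h2]
        have : N.factorization q = mv - mu := by rw [hNfac q hq]; simp [hmem, hdq]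
        rw [this, h2] at hv2
        rw [h1]
        cases hz' : hgt q z with
        | top =>
          exfalso; rw [hz'] at hv2
          rw [top_add] at hv2
          exact (ENat.coe_ne_top mv) hv2
        | coe mz =>
          rw [hz'] at hv2
          have : (mv : ℕ∞) = ((mz + (mv - mu) : ℕ) : ℕ∞) := by push_cast; exact hv2
          have hmz : mv = mz + (mv - mu) := by exact_mod_cast this
          have : mz = mu := by omega
          rw [this]
      · have hfz : nn.factorization q = 0 := by
          by_contra hne
          exact hmem (Nat.mem_primeFactors.2 ⟨hq, Nat.dvd_of_factorization_pos hne, hnn0⟩)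
        have hNz : N.factorization q = 0 := by rw [hNfac q hq]; simp [hmem]
        have : mv = mu := by omega
        rw [hNz] at hv2
        simp at hv2
        rw [← hv2, h2, h1, this]
  have heq : HeightEq u z := heightEq_iff_hgt.2 fun q hq => (hzu q hq).symm
  obtain ⟨σ, hσ⟩ := ht u z heq
  refine ⟨(nsmulHom N).comp σ.toAddMonoidHom, ?_⟩
  simp [nsmulHom, hσ, hz]





variable {H : Type*} [AddCommGroup H]

lemma heightLE_trans {K : Type*} [AddCommGroup K] {x : G} {y : H} {z : K}
    (h1 : HeightLE x y) (h2 : HeightLE y z) : HeightLE x z :=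
  fun p k hp hd => h2 p k hp (h1 p k hp hd)

lemma heightEq_symm {x : G} {y : H} (h : HeightEq x y) : HeightEq y x := ⟨h.2, h.1⟩

lemma heightEq_trans {K : Type*} [AddCommGroup K] {x : G} {y : H} {z : K}
    (h1 : HeightEq x y) (h2 : HeightEq y z) : HeightEq x z :=
  ⟨heightLE_trans h1.1 h2.1, heightLE_trans h2.2 h1.2⟩

lemma heightLE_zero (x : G) : HeightLE x (0 : H) :=
  fun _ _ _ _ => ⟨0, smul_zero _⟩

lemma ne_zero_of_heightEq (ht : TransitiveGrp G) {u : G} {v : H}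
    (h : HeightEq u v) (hu : u ≠ 0) : v ≠ 0 := by
  rintro rfl
  exact hu (eq_zero_of_all_divides ht fun p k hp => h.2 p k hp ⟨0, smul_zero _⟩)

/-- shear automorphism from a square-zero endomorphism -/
def shear {A : Type*} [AddCommGroup A] (T : A →+ A) (hT : ∀ z, T (T z) = 0) : A ≃+ A where
  toFun z := z + T z
  invFun z := z - T z
  left_inv z := by simp only [map_add, hT, add_zero]; abel
  right_inv z := by simp only [map_sub, hT, sub_zero]; abel
  map_add' a b := by simp only [map_add]; abel

@[simp] lemma shear_apply {A : Type*} [AddCommGroup A] (T : A →+ A)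
    (hT : ∀ z, T (T z) = 0) (z : A) : shear T hT z = z + T z := rfl

def zsmulHom (n : ℤ) : G →+ G where
  toFun := fun g => n • g
  map_zero' := smul_zero n
  map_add' := fun a b => smul_add n a b

/-- (a, b) ↦ (a + f b, b) -/
def shearFst (f : G →+ G) : (G × G) ≃+ (G × G) :=
  shear { toFun := fun z => (f z.2, 0), map_zero' := by simp,
          map_add' := fun a b => by simp [Prod.ext_iff] }
    (fun z => by simp [Prod.ext_iff])

lemma shearFst_apply (f : G →+ G) (a b : G) : shearFst f (a, b) = (a + f b, b) := by
  simp [shearFst, shear, AddMonoidHom.coe_mk]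

/-- (a, b) ↦ (a, b + f a) -/
def shearSnd (f : G →+ G) : (G × G) ≃+ (G × G) :=
  shear { toFun := fun z => (0, f z.1), map_zero' := by simp,
          map_add' := fun a b => by simp [Prod.ext_iff] }
    (fun z => by simp [Prod.ext_iff])

lemma shearSnd_apply (f : G →+ G) (a b : G) : shearSnd f (a, b) = (a, b + f a) := by
  simp [shearSnd, shear, AddMonoidHom.coe_mk]

-- lift an automorphism of `G × G` to two coordinates of a product
section Lift2
variable {I : Type*}

noncomputable def l2f (i j : I) (Θ : (G × G) →+ (G × G)) : (I → G) →+ (I → G) where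
  toFun z := fun k =>
    if k = i then (Θ (z i, z j)).1 else if k = j then (Θ (z i, z j)).2 else z k
  map_zero' := by
    funext k
    show (if k = i then (Θ (0, 0)).1 else if k = j then (Θ (0, 0)).2 else 0) = 0
    have h0 : Θ (0, 0) = 0 := by
      have : ((0 : G), (0 : G)) = (0 : G × G) := rfl
      rw [this, map_zero]
    split_ifs <;> simp [h0]
  map_add' a b := by
    funext k
    show (if k = i then (Θ ((a+b) i, (a+b) j)).1 else if k = j then (Θ ((a+b) i, (a+b) j)).2
        else (a+b) k)
      = (if k = i then (Θ (a i, a j)).1 else if k = j then (Θ (a i, a j)).2 else a k)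
        + (if k = i then (Θ (b i, b j)).1 else if k = j then (Θ (b i, b j)).2 else b k)
    have h : ((a + b) i, (a + b) j) = ((a i, a j) + (b i, b j) : G × G) := rfl
    rw [h, map_add]
    split_ifs <;> simp [Prod.fst_add, Prod.snd_add]

lemma l2f_pair (i j : I) (hij : i ≠ j) (Θ : (G × G) →+ (G × G)) (z : I → G) :
    (l2f i j Θ z i, l2f i j Θ z j) = Θ (z i, z j) := by
  have h1 : l2f i j Θ z i = (Θ (z i, z j)).1 := by simp [l2f]
  have h2 : l2f i j Θ z j = (Θ (z i, z j)).2 := by simp [l2f, Ne.symm hij]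
  rw [h1, h2]

lemma l2f_other (i j : I) (Θ : (G × G) →+ (G × G)) (z : I → G) {k : I}
    (hk1 : k ≠ i) (hk2 : k ≠ j) : l2f i j Θ z k = z k := by
  simp [l2f, hk1, hk2]

noncomputable def lift2 (i j : I) (hij : i ≠ j) (Θ : (G × G) ≃+ (G × G)) : (I → G) ≃+ (I → G) where
  toFun := l2f i j Θ.toAddMonoidHom
  invFun := l2f i j Θ.symm.toAddMonoidHom
  left_inv z := by
    funext k
    by_cases h1 : k = i
    · subst h1
      have := l2f_pair k j hij Θ.symm.toAddMonoidHom (l2f k j Θ.toAddMonoidHom z)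
      rw [l2f_pair k j hij Θ.toAddMonoidHom z] at this
      simp only [AddEquiv.coe_toAddMonoidHom] at this ⊢
      have h2 : Θ.symm (Θ (z k, z j)) = (z k, z j) := Θ.symm_apply_apply _
      rw [h2] at this
      exact congrArg Prod.fst this
    · by_cases h2 : k = j
      · subst h2
        have := l2f_pair i k hij Θ.symm.toAddMonoidHom (l2f i k Θ.toAddMonoidHom z)
        rw [l2f_pair i k hij Θ.toAddMonoidHom z] at this
        simp only [AddEquiv.coe_toAddMonoidHom] at this ⊢
        have h3 : Θ.symm (Θ (z i, z k)) = (z i, z k) := Θ.symm_apply_apply _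
        rw [h3] at this
        exact congrArg Prod.snd this
      · rw [l2f_other i j _ _ h1 h2, l2f_other i j _ _ h1 h2]
  right_inv z := by
    funext k
    by_cases h1 : k = i
    · subst h1
      have := l2f_pair k j hij Θ.toAddMonoidHom (l2f k j Θ.symm.toAddMonoidHom z)
      rw [l2f_pair k j hij Θ.symm.toAddMonoidHom z] at this
      simp only [AddEquiv.coe_toAddMonoidHom] at this ⊢
      have h2 : Θ (Θ.symm (z k, z j)) = (z k, z j) := Θ.apply_symm_apply _
      rw [h2] at this
      exact congrArg Prod.fst this
    · by_cases h2 : k = j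
      · subst h2
        have := l2f_pair i k hij Θ.toAddMonoidHom (l2f i k Θ.symm.toAddMonoidHom z)
        rw [l2f_pair i k hij Θ.symm.toAddMonoidHom z] at this
        simp only [AddEquiv.coe_toAddMonoidHom] at this ⊢
        have h3 : Θ (Θ.symm (z i, z k)) = (z i, z k) := Θ.apply_symm_apply _
        rw [h3] at this
        exact congrArg Prod.snd this
      · rw [l2f_other i j _ _ h1 h2, l2f_other i j _ _ h1 h2]
  map_add' a b := map_add _ a b

lemma lift2_pair {i j : I} (hij : i ≠ j) (Θ : (G × G) ≃+ (G × G)) (z : I → G) :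
    (lift2 i j hij Θ z i, lift2 i j hij Θ z j) = Θ (z i, z j) :=
  l2f_pair i j hij Θ.toAddMonoidHom z

lemma lift2_other {i j : I} (hij : i ≠ j) (Θ : (G × G) ≃+ (G × G)) (z : I → G) {k : I}
    (hk1 : k ≠ i) (hk2 : k ≠ j) : lift2 i j hij Θ z k = z k :=
  l2f_other i j Θ.toAddMonoidHom z hk1 hk2

end Lift2

section Realizer

lemma factorization_prod_pow {s : Finset ℕ} (hs : ∀ q ∈ s, q.Prime) (d : ℕ → ℕ)
    {q : ℕ} (hq : q.Prime) :
    (∏ p ∈ s, p ^ d p).factorization q = if q ∈ s then d q else 0 := by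
  rw [Nat.factorization_prod (fun p hp => pow_ne_zero _ (hs p hp).pos.ne')]
  rw [Finset.sum_apply']
  have : ∀ p ∈ s, ((p ^ d p).factorization) q = if q = p then d p else 0 := by
    intro p hp
    rw [(hs p hp).factorization_pow]
    simp [Finsupp.single_apply, eq_comm]
  rw [Finset.sum_congr rfl this, Finset.sum_ite_eq s q (fun p => d p)]

lemma prod_pow_ne_zero {s : Finset ℕ} (hs : ∀ q ∈ s, q.Prime) (d : ℕ → ℕ) :
    (∏ p ∈ s, p ^ d p) ≠ 0 :=
  Finset.prod_ne_zero_iff.2 fun q hq => pow_ne_zero _ (hs q hq).pos.ne'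

variable (hTF : IsTorsionFreeGrp G) (hhom : Homogeneous G) (ht : TransitiveGrp G)
include hTF hhom

/-- one-sided realizer: divide A by the primes where it exceeds B -/
lemma realizer_half {A B : G} (hA : A ≠ 0) (hB : B ≠ 0) :
    ∃ (u : G) (N : ℕ), N ≠ 0 ∧ N • u = A ∧
      (∀ p, p.Prime → hgt p u = min (hgt p A) (hgt p B)) ∧
      (∀ p, p.Prime → 1 ≤ N.factorization p → hgt p B < hgt p A) := by
  obtain ⟨n, hn, hlen⟩ := (hhom A B hA hB).1
  set nn := n.natAbs with hnn
  have hnn0 : nn ≠ 0 := Int.natAbs_ne_zero.2 hn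
  have hgap : ∀ q : ℕ, q.Prime → hgt q A ≤ hgt q B + (nn.factorization q : ℕ∞) := by
    intro q hq
    have := heightLE_iff_hgt.1 hlen q hq
    rwa [hgt_zsmul_eq hTF hq hn] at this
  classical
  let d : ℕ → ℕ := fun q =>
    if hgt q A ≤ hgt q B then 0 else (hgt q A).toNat - (hgt q B).toNat
  set N : ℕ := ∏ q ∈ nn.primeFactors, q ^ d q with hN
  have hsp : ∀ q ∈ nn.primeFactors, q.Prime := fun q hq => Nat.prime_of_mem_primeFactors hq
  have hN0 : N ≠ 0 := prod_pow_ne_zero hsp d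
  have hNfac : ∀ q : ℕ, q.Prime →
      N.factorization q = if q ∈ nn.primeFactors then d q else 0 :=
    fun q hq => factorization_prod_pow hsp d hq
  -- fine structure at primes where A exceeds B
  have hexc : ∀ q : ℕ, q.Prime → ¬ hgt q A ≤ hgt q B → ∃ mA mB : ℕ,
      hgt q A = (mA : ℕ∞) ∧ hgt q B = (mB : ℕ∞) ∧ mB < mA ∧
      q ∈ nn.primeFactors ∧ d q = mA - mB := by
    intro q hq hqAB
    have hlt : hgt q B < hgt q A := not_le.1 hqAB
    have hBne : hgt q B ≠ ⊤ := fun h => absurd (h ▸ hlt) (by simp)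
    obtain ⟨mB, hmB⟩ : ∃ mB : ℕ, hgt q B = (mB : ℕ∞) := by
      cases hB' : hgt q B with
      | top => exact absurd hB' hBne
      | coe m => exact ⟨m, rfl⟩
    have hfq : 1 ≤ nn.factorization q := by
      by_contra hf
      have hf0 : nn.factorization q = 0 := by omega
      have := hgap q hq
      rw [hf0, hmB] at this
      simp at this
      exact hqAB (le_trans this (le_of_eq hmB.symm))
    have hAne : hgt q A ≠ ⊤ := by
      intro hAt
      have := hgap q hq
      rw [hAt, hmB] at this
      have h2 : ((mB + nn.factorization q : ℕ) : ℕ∞) = ⊤ := by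
        push_cast
        exact top_le_iff.1 this
      exact (ENat.coe_ne_top _) h2
    obtain ⟨mA, hmA⟩ : ∃ mA : ℕ, hgt q A = (mA : ℕ∞) := by
      cases hA' : hgt q A with
      | top => exact absurd hA' hAne
      | coe m => exact ⟨m, rfl⟩
    have hmBA : mB < mA := by
      rw [hmA, hmB] at hlt; exact_mod_cast hlt
    refine ⟨mA, mB, hmA, hmB, hmBA, ?_, ?_⟩
    · exact Nat.mem_primeFactors.2 ⟨hq, Nat.dvd_of_factorization_pos (by omega), hnn0⟩
    · simp only [d, if_neg hqAB]
      rw [hmA, hmB]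
      simp
  have hdiv : ∀ q, q.Prime → (N.factorization q : ℕ∞) ≤ hgt q A := by
    intro q hq
    rw [hNfac q hq]
    by_cases hmem : q ∈ nn.primeFactors
    · simp only [hmem, if_true]
      by_cases hqAB : hgt q A ≤ hgt q B
      · simp [d, hqAB]
      · obtain ⟨mA, mB, h1, h2, h3, _, h5⟩ := hexc q hq hqAB
        rw [h5, h1]
        exact_mod_cast (by omega : mA - mB ≤ mA)
    · rw [if_neg hmem]
      simp
  obtain ⟨u, hu⟩ := exists_div hTF hN0 hdiv
  have huh : ∀ q : ℕ, q.Prime → hgt q u = min (hgt q A) (hgt q B) := by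
    intro q hq
    have hA2 : hgt q A = hgt q u + (N.factorization q : ℕ∞) := by
      rw [← hu]; exact hgt_nsmul_eq hTF hq hN0 u
    by_cases hqAB : hgt q A ≤ hgt q B
    · rw [min_eq_left hqAB]
      have hdq : d q = 0 := by simp [d, hqAB]
      have : N.factorization q = 0 := by
        rw [hNfac q hq]
        by_cases hmem : q ∈ nn.primeFactors <;> simp [hmem, hdq]
      rw [this] at hA2
      simpa using hA2.symm
    · obtain ⟨mA, mB, h1, h2, h3, h4, h5⟩ := hexc q hq hqAB
      rw [min_eq_right (not_le.1 hqAB).le]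
      have : N.factorization q = mA - mB := by rw [hNfac q hq]; simp [h4, h5]
      rw [this, h1] at hA2
      cases hu' : hgt q u with
      | top =>
        exfalso
        rw [hu', top_add] at hA2
        exact (ENat.coe_ne_top mA) hA2
      | coe mu =>
        rw [hu'] at hA2
        have : (mA : ℕ∞) = ((mu + (mA - mB) : ℕ) : ℕ∞) := by push_cast; exact hA2
        have hm : mA = mu + (mA - mB) := by exact_mod_cast this
        have : mu = mB := by omega
        rw [this, h2]
  refine ⟨u, N, hN0, hu, huh, ?_⟩
  intro q hq hfq
  rw [hNfac q hq] at hfq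
  by_cases hmem : q ∈ nn.primeFactors
  · simp only [hmem, if_true] at hfq
    by_contra hc
    push_neg at hc
    have : d q = 0 := by simp [d, hc]
    omega
  · simp [hmem] at hfq

end Realizer

section PE
variable (hTF : IsTorsionFreeGrp G) (hhom : Homogeneous G) (ht : TransitiveGrp G)
include hTF hhom ht

lemma pe_unit (a : ℤ) (ha : IsUnit a) (u v : G) :
    ∃ (Θ : (G × G) ≃+ (G × G)) (r w : G),
      Θ (a • u, (0:ℤ) • v) = (r, w) ∧ HeightEq r u ∧ HeightLE u w := by
  rcases Int.isUnit_iff.1 ha with rfl | rfl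
  · exact ⟨AddEquiv.refl _, u, 0, by simp, heightEq_iff_hgt.2 (fun p hp => rfl),
      heightLE_zero u⟩
  · refine ⟨AddEquiv.refl _, -u, 0, by simp, ?_, heightLE_zero u⟩
    exact heightEq_iff_hgt.2 fun p hp => hgt_neg p u

lemma pe_aux : ∀ (fuel : ℕ) (a b : ℤ) (u v : G), IsCoprime a b →
    b.natAbs ≤ fuel → HeightEq u v → u ≠ 0 →
    ∃ (Θ : (G × G) ≃+ (G × G)) (r w : G),
      Θ (a • u, b • v) = (r, w) ∧ HeightEq r u ∧ HeightLE u w := by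
  intro fuel
  induction fuel with
  | zero =>
    intro a b u v hco hb heq hu
    have hb0 : b = 0 := Int.natAbs_eq_zero.1 (Nat.le_zero.1 hb)
    subst hb0
    exact pe_unit hTF hhom ht a (isCoprime_zero_right.1 hco) u v
  | succ n ih =>
    intro a b u v hco hb heq hu
    rcases eq_or_ne b 0 with rfl | hb0
    · exact pe_unit hTF hhom ht a (isCoprime_zero_right.1 hco) u v
    · have hv : v ≠ 0 := ne_zero_of_heightEq ht heq hu
      obtain ⟨σ, hσ⟩ := ht u v heq
      have hσ' : σ.symm v = u := by rw [← hσ, AddEquiv.symm_apply_apply]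
      set t : ℤ := -(a / b) with ht'
      have hmod : a + t * b = a % b := by rw [ht', Int.emod_def]; ring
      have hco' : IsCoprime b (a % b) := by
        have h := (hco.symm.add_mul_right_right t)
        rwa [hmod] at h
      have hlt : (a % b).natAbs ≤ n := by
        have h1 : 0 ≤ a % b := Int.emod_nonneg a hb0
        have h2 : a % b < |b| := Int.emod_lt_abs a hb0
        have h3 : |b| = (b.natAbs : ℤ) := Int.abs_eq_natAbs b
        omega
      set f : G →+ G := (zsmulHom t).comp σ.symm.toAddMonoidHom with hfdef
      have hfval : f (b • v) = (t * b) • u := by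
        simp only [hfdef, AddMonoidHom.comp_apply, AddEquiv.coe_toAddMonoidHom]
        rw [map_zsmul, hσ', zsmulHom]
        simp only [AddMonoidHom.coe_mk, ZeroHom.coe_mk]
        rw [smul_smul]
      have hval : shearFst f (a • u, b • v) = ((a % b) • u, b • v) := by
        rw [shearFst_apply, hfval, ← add_smul, hmod]
      obtain ⟨Θ', r, w, hΘ', hrv, hvw⟩ :=
        ih b (a % b) v u hco' (by simpa using hlt) (heightEq_symm heq) hv
      refine ⟨(shearFst f).trans ((AddEquiv.prodComm).trans Θ'), r, w, ?_, ?_, ?_⟩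
      · rw [AddEquiv.trans_apply, AddEquiv.trans_apply, hval]
        have : (AddEquiv.prodComm ((a % b) • u, b • v) : G × G) = (b • v, (a % b) • u) := rfl
        rw [this, hΘ']
      · exact heightEq_trans hrv (heightEq_symm heq)
      · exact heightLE_trans heq.1 hvw

/-- the pair normalisation: any pair is automorphic to (0, r) with r realizing the meet -/
lemma pe (A B : G) :
    ∃ (Θ : (G × G) ≃+ (G × G)) (r : G),
      Θ (A, B) = (0, r) ∧ ∀ p, p.Prime → hgt p r = min (hgt p A) (hgt p B) := by
  rcases eq_or_ne A 0 with rfl | hA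
  · refine ⟨AddEquiv.refl _, B, by simp, fun p hp => ?_⟩
    rw [hgt_zero_elt, min_eq_right le_top]
  rcases eq_or_ne B 0 with rfl | hB
  · refine ⟨AddEquiv.prodComm, A, rfl, fun p hp => ?_⟩
    rw [hgt_zero_elt, min_eq_left le_top]
  · obtain ⟨u, N₀, hN₀, huA, huh, huexc⟩ := realizer_half hTF hhom hA hB
    obtain ⟨v, N₁, hN₁, hvB, hvh, hvexc⟩ := realizer_half hTF hhom hB hA
    have hco : Nat.Coprime N₀ N₁ := by
      by_contra hg
      obtain ⟨q, hq, hqd⟩ := Nat.exists_prime_and_dvd hg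
      have h0 : 1 ≤ N₀.factorization q :=
        (Nat.Prime.dvd_iff_one_le_factorization hq hN₀).1 (hqd.trans (Nat.gcd_dvd_left _ _))
      have h1 : 1 ≤ N₁.factorization q :=
        (Nat.Prime.dvd_iff_one_le_factorization hq hN₁).1 (hqd.trans (Nat.gcd_dvd_right _ _))
      exact absurd ((huexc q hq h0).trans (hvexc q hq h1)) (lt_irrefl _)
    have hequv : HeightEq u v := heightEq_iff_hgt.2 fun p hp => by
      rw [huh p hp, hvh p hp, min_comm]
    have hu0 : u ≠ 0 := by rintro rfl; rw [smul_zero] at huA; exact hA huA.symm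
    have hcoZ : IsCoprime (N₀ : ℤ) (N₁ : ℤ) := Int.isCoprime_iff_gcd_eq_one.2 (by
      simpa [Int.gcd] using hco)
    obtain ⟨Θ₁, r, w, hΘ₁, hru, huw⟩ :=
      pe_aux hTF hhom ht N₁ (N₀ : ℤ) (N₁ : ℤ) u v hcoZ (by simp) hequv hu0
    have hAB : (((N₀:ℤ) • u, (N₁:ℤ) • v) : G × G) = (A, B) := by
      rw [natCast_zsmul, natCast_zsmul, huA, hvB]
    rw [hAB] at hΘ₁
    have hr0 : r ≠ 0 := ne_zero_of_heightEq ht (heightEq_symm hru) hu0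
    have hrw : HeightLE r (-w) := by
      refine heightLE_iff_hgt.2 fun p hp => ?_
      rw [hgt_neg]
      calc hgt p r = hgt p u := heightEq_iff_hgt.1 hru p hp
        _ ≤ hgt p w := heightLE_iff_hgt.1 huw p hp
    obtain ⟨f, hf⟩ := f2 hTF hhom ht hr0 hrw
    refine ⟨(Θ₁.trans (shearSnd f)).trans AddEquiv.prodComm, r, ?_, fun p hp => ?_⟩
    · rw [AddEquiv.trans_apply, AddEquiv.trans_apply, hΘ₁, shearSnd_apply, hf]
      have : w + -w = (0 : G) := add_neg_cancel w
      rw [this]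
      rfl
    · rw [heightEq_iff_hgt.1 hru p hp, huh p hp]

end PE


section Finite
variable {I : Type*}

lemma hgt_pi_eq_inf [Fintype I] (p : ℕ) (x : I → G) :
    hgt p x = Finset.univ.inf (fun i => hgt p (x i)) := by
  refine le_antisymm (Finset.le_inf fun i _ => hgt_pi_le p x i) ?_
  exact hgt_pi_ge p x _ fun i => Finset.inf_le (Finset.mem_univ i)

variable (hTF : IsTorsionFreeGrp G) (hhom : Homogeneous G) (ht : TransitiveGrp G)
include hTF hhom ht

lemma fr (S : Finset I) (x : I → G) (hS : S.Nonempty) :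
    ∃ (Θ : (I → G) ≃+ (I → G)) (i₀ : I) (r : G), i₀ ∈ S ∧
      (Θ x = fun k => if k ∈ S then (if k = i₀ then r else 0) else x k) ∧
      ∀ p, p.Prime → hgt p r = S.inf (fun i => hgt p (x i)) := by
  classical
  revert hS
  induction S using Finset.cons_induction with
  | empty => intro hS; exact absurd hS (by simp)
  | cons a S ha ih =>
    intro _
    rcases S.eq_empty_or_nonempty with rfl | hS'
    · refine ⟨AddEquiv.refl _, a, x a, Finset.mem_cons_self a _, ?_, ?_⟩
      · funext k
        by_cases hk : k = a
        · subst hk; simp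
        · simp [hk]
      · intro p hp; simp
    · obtain ⟨Θ', i₀, r', hi₀, heq', hinf'⟩ := ih hS'
      have hne : i₀ ≠ a := fun h => ha (h ▸ hi₀)
      obtain ⟨Θ₂, r, hΘ₂, hr⟩ := pe hTF hhom ht r' (x a)
      have hy'i₀ : Θ' x i₀ = r' := by rw [heq']; simp [hi₀]
      have hy'a : Θ' x a = x a := by rw [heq']; simp [ha]
      have hpair := lift2_pair hne Θ₂ (Θ' x)
      rw [hy'i₀, hy'a, hΘ₂] at hpair
      have hfst : lift2 i₀ a hne Θ₂ (Θ' x) i₀ = 0 := by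
        have := congrArg Prod.fst hpair; simpa using this
      have hsnd : lift2 i₀ a hne Θ₂ (Θ' x) a = r := by
        have := congrArg Prod.snd hpair; simpa using this
      refine ⟨Θ'.trans (lift2 i₀ a hne Θ₂), a, r, Finset.mem_cons_self a _, ?_, ?_⟩
      · funext k
        rw [AddEquiv.trans_apply]
        by_cases hk2 : k = a
        · subst hk2; rw [hsnd]; simp
        · by_cases hk1 : k = i₀
          · subst hk1
            rw [hfst]
            simp [Finset.mem_cons, hi₀, hne, hk2]
          · rw [lift2_other hne Θ₂ (Θ' x) hk1 hk2, heq']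
            by_cases hkS : k ∈ S
            · simp [hkS, hk1, hk2, Finset.mem_cons]
            · simp [hkS, hk2, Finset.mem_cons]
      · intro p hp
        rw [hr p hp, hinf' p hp, Finset.inf_cons, min_comm]

lemma main_finite [Fintype I] [Nonempty I] : TransitiveGrp (I → G) := by
  classical
  intro x y hxy
  obtain ⟨Θx, ix, rx, _, hxeq, hxinf⟩ := fr hTF hhom ht Finset.univ x Finset.univ_nonempty
  obtain ⟨Θy, iy, ry, _, hyeq, hyinf⟩ := fr hTF hhom ht Finset.univ y Finset.univ_nonempty
  have hrxy : HeightEq rx ry := by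
    refine heightEq_iff_hgt.2 fun p hp => ?_
    rw [hxinf p hp, hyinf p hp, ← hgt_pi_eq_inf p x, ← hgt_pi_eq_inf p y]
    exact heightEq_iff_hgt.1 hxy p hp
  obtain ⟨σ, hσ⟩ := ht rx ry hrxy
  set Φ : (I → G) ≃+ (I → G) :=
    AddEquiv.piCongrRight (fun i => if i = ix then σ else AddEquiv.refl G) with hΦdef
  have hΘxx : Θx x = fun k => if k = ix then rx else 0 := by
    rw [hxeq]; funext k; simp
  have hΘyy : Θy y = fun k => if k = iy then ry else 0 := by
    rw [hyeq]; funext k; simp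
  have hΦ : Φ (fun k => if k = ix then rx else 0) = fun k => if k = ix then ry else 0 := by
    funext k
    rw [hΦdef]
    by_cases hk : k = ix
    · subst hk
      simp [AddEquiv.piCongrRight_apply, hσ]
    · simp [AddEquiv.piCongrRight_apply, hk]
  rcases eq_or_ne ix iy with rfl | hne
  · refine ⟨(Θx.trans Φ).trans Θy.symm, ?_⟩
    rw [AddEquiv.trans_apply, AddEquiv.trans_apply, hΘxx, hΦ]
    rw [AddEquiv.symm_apply_eq, hΘyy]
  · set W := lift2 ix iy hne (AddEquiv.prodComm : (G × G) ≃+ (G × G)) with hWdef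
    have hW : W (fun k => if k = ix then ry else 0) = fun k => if k = iy then ry else 0 := by
      set z : I → G := fun k => if k = ix then ry else 0 with hz
      have hpair := lift2_pair hne (AddEquiv.prodComm : (G × G) ≃+ (G × G)) z
      have hzix : z ix = ry := by simp [hz]
      have hziy : z iy = 0 := by simp [hz, Ne.symm hne]
      rw [hzix, hziy] at hpair
      have hfst : W z ix = 0 := by
        have := congrArg Prod.fst hpair; simpa [hWdef] using this
      have hsnd : W z iy = ry := by
        have := congrArg Prod.snd hpair; simpa [hWdef] using this
      funext k
      by_cases h1 : k = ix
      · subst h1; rw [hfst]; simp [hne]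
      · by_cases h2 : k = iy
        · subst h2; rw [hsnd]; simp
        · rw [hWdef, lift2_other hne _ z h1 h2]
          simp [hz, h1, h2]
    refine ⟨((Θx.trans Φ).trans W).trans Θy.symm, ?_⟩
    rw [AddEquiv.trans_apply, AddEquiv.trans_apply, AddEquiv.trans_apply, hΘxx, hΦ, hW]
    rw [AddEquiv.symm_apply_eq, hΘyy]

end Finite

section Row

lemma ne_zero_of_hgt_ne_top {p : ℕ} {x : G} (h : hgt p x ≠ ⊤) : x ≠ 0 :=
  fun hx => h (hx ▸ hgt_zero_elt p)

lemma exists_bezout {α : Type*} (F : Finset α) (R : α → ℕ) :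
    ∃ β : α → ℤ, ∑ i ∈ F, β i * (R i : ℤ) = ((F.gcd R : ℕ) : ℤ) := by
  classical
  induction F using Finset.cons_induction with
  | empty => exact ⟨0, by simp⟩
  | cons a F ha ih =>
    obtain ⟨β, hβ⟩ := ih
    set g₂ := F.gcd R with hg₂
    have hgcd : (Finset.cons a F ha).gcd R = Nat.gcd (R a) g₂ := by
      rw [Finset.cons_eq_insert, Finset.gcd_insert]; rfl
    have hbez := Nat.gcd_eq_gcd_ab (R a) g₂
    refine ⟨fun i => if i = a then Nat.gcdA (R a) g₂ else Nat.gcdB (R a) g₂ * β i, ?_⟩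
    rw [Finset.sum_cons, hgcd]
    have hsum : ∑ i ∈ F, (if i = a then Nat.gcdA (R a) g₂ else Nat.gcdB (R a) g₂ * β i)
        * (R i : ℤ) = Nat.gcdB (R a) g₂ * ∑ i ∈ F, β i * (R i : ℤ) := by
      rw [Finset.mul_sum]
      refine Finset.sum_congr rfl fun i hi => ?_
      have : i ≠ a := fun h => ha (h ▸ hi)
      rw [if_neg this]; ring
    rw [hsum, hβ]
    have hbeta : (fun i => if i = a then Nat.gcdA (R a) g₂ else Nat.gcdB (R a) g₂ * β i) a
        = Nat.gcdA (R a) g₂ := by simp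
    rw [hbeta, hbez]
    ring

variable (hTF : IsTorsionFreeGrp G) (hhom : Homogeneous G) (ht : TransitiveGrp G)
include hTF hhom ht

/-- The row lemma: if the family `g` has pointwise height-inf below `χ(t)`,
then `t` is a finite sum of endomorphic images of members of the family. -/
lemma row {B : Type*} (g : B → G) (t : G) (hle : HeightLE (g : B → G) t)
    (c : B) (hc : g c ≠ 0) :
    ∃ (F : Finset B) (f : B → (G →+ G)), (∑ b ∈ F, f b (g b)) = t := by
  classical
  rcases eq_or_ne t 0 with rfl | ht0
  · exact ⟨∅, 0, by simp⟩
  -- choice of type-comparison witnesses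
  have hsel : ∀ i : B, ∃ n : ℤ, n ≠ 0 ∧ (g i ≠ 0 →
      ∀ q, q.Prime → hgt q (g i) ≤ hgt q t + ((n.natAbs.factorization q : ℕ∞))) := by
    intro i
    by_cases hi : g i = 0
    · exact ⟨1, one_ne_zero, fun h => absurd hi h⟩
    · obtain ⟨n, hn, hlen⟩ := (hhom (g i) t hi ht0).1
      refine ⟨n, hn, fun _ q hq => ?_⟩
      have := heightLE_iff_hgt.1 hlen q hq
      rwa [hgt_zsmul_eq hTF hq hn] at this
  choose nfun hn0 hbound using hsel
  set e : B → ℕ → ℕ := fun i q =>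
    if hgt q (g i) ≤ hgt q t then 0 else (hgt q (g i)).toNat - (hgt q t).toNat with he
  set R : B → ℕ := fun i => ∏ q ∈ ((nfun i).natAbs).primeFactors, q ^ (e i q) with hR
  have hprimes : ∀ i : B, ∀ q ∈ ((nfun i).natAbs).primeFactors, q.Prime :=
    fun i q hq => Nat.prime_of_mem_primeFactors hq
  have hR0 : ∀ i : B, R i ≠ 0 := fun i => prod_pow_ne_zero (hprimes i) _
  have hRfac : ∀ i : B, ∀ q : ℕ, q.Prime →
      (R i).factorization q = if q ∈ ((nfun i).natAbs).primeFactors then e i q else 0 :=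
    fun i q hq => factorization_prod_pow (hprimes i) _ hq
  -- fine data at gap primes
  have hgapdata : ∀ i : B, g i ≠ 0 → ∀ q : ℕ, q.Prime → ¬ (hgt q (g i) ≤ hgt q t) →
      ∃ mt mg : ℕ, hgt q t = (mt : ℕ∞) ∧ hgt q (g i) = (mg : ℕ∞) ∧ mt < mg ∧
        e i q = mg - mt ∧ 1 ≤ (nfun i).natAbs.factorization q := by
    intro i hi q hq hqle
    have hlt : hgt q t < hgt q (g i) := not_le.1 hqle
    have htne : hgt q t ≠ ⊤ := fun h => absurd (h ▸ hlt) (by simp)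
    obtain ⟨mt, hmt⟩ : ∃ mt : ℕ, hgt q t = (mt : ℕ∞) := by
      cases h' : hgt q t with
      | top => exact absurd h' htne
      | coe m => exact ⟨m, rfl⟩
    have hb := hbound i hi q hq
    have hgne : hgt q (g i) ≠ ⊤ := by
      intro h'
      rw [h', hmt] at hb
      have : ((mt + (nfun i).natAbs.factorization q : ℕ) : ℕ∞) = ⊤ := by
        push_cast; exact top_le_iff.1 hb
      exact (ENat.coe_ne_top _) this
    obtain ⟨mg, hmg⟩ : ∃ mg : ℕ, hgt q (g i) = (mg : ℕ∞) := by
      cases h' : hgt q (g i) with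
      | top => exact absurd h' hgne
      | coe m => exact ⟨m, rfl⟩
    have hmtg : mt < mg := by rw [hmt, hmg] at hlt; exact_mod_cast hlt
    have hfq : 1 ≤ (nfun i).natAbs.factorization q := by
      by_contra hf
      have hf0 : (nfun i).natAbs.factorization q = 0 := by omega
      rw [hmt, hmg, hf0] at hb
      simp at hb
      exact absurd hb (by exact_mod_cast not_le.2 hmtg)
    have heiq : e i q = mg - mt := by
      simp only [he]
      rw [if_neg hqle, hmt, hmg]
      simp
    exact ⟨mt, mg, hmt, hmg, hmtg, heiq, hfq⟩
  -- R i bounds the gap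
  have hRle : ∀ i : B, g i ≠ 0 → ∀ q : ℕ, q.Prime →
      hgt q (g i) ≤ hgt q t + ((R i).factorization q : ℕ∞) := by
    intro i hi q hq
    by_cases hqle : hgt q (g i) ≤ hgt q t
    · exact hqle.trans (le_add_right le_rfl)
    · obtain ⟨mt, mg, hmt, hmg, hmtg, heiq, hfq⟩ := hgapdata i hi q hq hqle
      have hmem : q ∈ ((nfun i).natAbs).primeFactors :=
        Nat.mem_primeFactors.2 ⟨hq, Nat.dvd_of_factorization_pos (by omega),
          Int.natAbs_ne_zero.2 (hn0 i)⟩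
      rw [hRfac i q hq, if_pos hmem, heiq, hmt, hmg]
      have : ((mt + (mg - mt) : ℕ) : ℕ∞) = ((mt : ℕ∞) + ((mg - mt : ℕ) : ℕ∞)) := by
        push_cast; rfl
      rw [← this]
      exact_mod_cast (by omega : mg ≤ mt + (mg - mt))
  -- witnesses for gap primes of the base c
  have hwit : ∀ q : ℕ, q.Prime → ¬ (hgt q (g c) ≤ hgt q t) →
      ∃ b : B, hgt q (g b) ≤ hgt q t ∧ e b q = 0 ∧ g b ≠ 0 := by
    intro q hq hqle
    have hlt : hgt q t < hgt q (g c) := not_le.1 hqle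
    have htne : hgt q t ≠ ⊤ := fun h => absurd (h ▸ hlt) (by simp)
    have hprodle : hgt q (g : B → G) ≤ hgt q t := heightLE_iff_hgt.1 hle q hq
    obtain ⟨m, hm⟩ : ∃ m : ℕ, hgt q (g : B → G) = (m : ℕ∞) := by
      cases h' : hgt q (g : B → G) with
      | top => exact absurd (top_le_iff.1 (h' ▸ hprodle)) htne
      | coe m => exact ⟨m, rfl⟩
    obtain ⟨b, hb⟩ := hgt_pi_attained hm
    have hble : hgt q (g b) ≤ hgt q t := by rw [hb, ← hm]; exact hprodle
    refine ⟨b, hble, by simp [he, hble], ?_⟩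
    exact ne_zero_of_hgt_ne_top (p := q) (by rw [hb]; exact ENat.coe_ne_top m)
  set witfun : ℕ → B := fun q =>
    if h : q.Prime ∧ ¬ (hgt q (g c) ≤ hgt q t) then (hwit q h.1 h.2).choose else c
    with hwf
  set Bad : Finset ℕ :=
    ((nfun c).natAbs).primeFactors.filter (fun q => ¬ (hgt q (g c) ≤ hgt q t)) with hBad
  set F : Finset B := insert c (Bad.image witfun) with hF
  have hFne : ∀ i ∈ F, g i ≠ 0 := by
    intro i hi
    rw [hF, Finset.mem_insert] at hi
    rcases hi with rfl | hi
    · exact hc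
    · obtain ⟨q, hq, rfl⟩ := Finset.mem_image.1 hi
      rw [hBad, Finset.mem_filter] at hq
      have hqp : q.Prime := Nat.prime_of_mem_primeFactors hq.1
      have hcond : q.Prime ∧ ¬ (hgt q (g c) ≤ hgt q t) := ⟨hqp, hq.2⟩
      rw [hwf]
      simp only [hcond, dif_pos]
      exact ((hwit q hqp hq.2).choose_spec).2.2
  have hcover : ∀ q : ℕ, q.Prime → ∃ i ∈ F, e i q = 0 := by
    intro q hq
    by_cases hqle : hgt q (g c) ≤ hgt q t
    · exact ⟨c, by rw [hF]; exact Finset.mem_insert_self c _, by simp [he, hqle]⟩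
    · have hmemq : q ∈ Bad := by
        rw [hBad, Finset.mem_filter]
        refine ⟨?_, hqle⟩
        -- q must divide nfun c
        obtain ⟨mt, mg, hmt, hmg, hmtg, heiq, hfq⟩ := hgapdata c hc q hq hqle
        exact Nat.mem_primeFactors.2 ⟨hq, Nat.dvd_of_factorization_pos (by omega),
          Int.natAbs_ne_zero.2 (hn0 c)⟩
      refine ⟨witfun q, ?_, ?_⟩
      · rw [hF]
        exact Finset.mem_insert_of_mem (Finset.mem_image_of_mem witfun hmemq)
      · have hcond : q.Prime ∧ ¬ (hgt q (g c) ≤ hgt q t) := ⟨hq, hqle⟩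
        rw [hwf]
        simp only [hcond, dif_pos]
        exact ((hwit q hq hqle).choose_spec).2.1
  -- gcd of the R i over F is 1
  have hgcd : F.gcd R = 1 := by
    by_contra hg
    obtain ⟨d, hd, hdd⟩ := Nat.exists_prime_and_dvd hg
    obtain ⟨i, hiF, hei⟩ := hcover d hd
    have hdi : d ∣ R i := hdd.trans (Finset.gcd_dvd hiF)
    have h1 : 1 ≤ (R i).factorization d :=
      (Nat.Prime.dvd_iff_one_le_factorization hd (hR0 i)).1 hdi
    rw [hRfac i d hd] at h1
    by_cases hmem : d ∈ ((nfun i).natAbs).primeFactors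
    · rw [if_pos hmem] at h1; omega
    · rw [if_neg hmem] at h1; omega
  obtain ⟨β, hβ⟩ := exists_bezout F R
  rw [hgcd] at hβ
  -- the individual maps
  have hmaps : ∀ i ∈ F, ∃ f : G →+ G, f (g i) = (β i * (R i : ℤ)) • t := by
    intro i hiF
    rcases eq_or_ne (β i) 0 with hβ0 | hβ0
    · exact ⟨0, by rw [hβ0]; simp⟩
    · have hγ0 : β i * (R i : ℤ) ≠ 0 :=
        mul_ne_zero hβ0 (by exact_mod_cast hR0 i)
      refine f2 hTF hhom ht (hFne i hiF) ?_
      refine heightLE_iff_hgt.2 fun q hq => ?_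
      rw [hgt_zsmul_eq hTF hq hγ0]
      have hfacge : (R i).factorization q ≤ (β i * (R i : ℤ)).natAbs.factorization q := by
        have : (β i * (R i : ℤ)).natAbs = (β i).natAbs * R i := by
          rw [Int.natAbs_mul]; simp
        rw [this, Nat.factorization_mul (Int.natAbs_ne_zero.2 hβ0) (hR0 i)]
        simp
      calc hgt q (g i) ≤ hgt q t + ((R i).factorization q : ℕ∞) :=
            hRle i (hFne i hiF) q hq
        _ ≤ hgt q t + ((β i * (R i : ℤ)).natAbs.factorization q : ℕ∞) := by
            exact add_le_add_right (by exact_mod_cast hfacge) _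
  -- assemble
  have hmaps' : ∀ i : B, ∃ f : G →+ G, i ∈ F → f (g i) = (β i * (R i : ℤ)) • t := by
    intro i
    by_cases hiF : i ∈ F
    · obtain ⟨f, hf⟩ := hmaps i hiF
      exact ⟨f, fun _ => hf⟩
    · exact ⟨0, fun h => absurd h hiF⟩
  choose ffun hffun using hmaps'
  refine ⟨F, ffun, ?_⟩
  calc ∑ b ∈ F, ffun b (g b) = ∑ b ∈ F, (β b * (R b : ℤ)) • t :=
        Finset.sum_congr rfl fun b hb => hffun b hb
    _ = (∑ b ∈ F, β b * (R b : ℤ)) • t := by rw [Finset.sum_smul]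
    _ = t := by rw [hβ]; simp

end Row

section Passes
variable {I : Type*}

lemma min_le_hgt_sub (p : ℕ) (u v : G) :
    min (hgt p u) (hgt p v) ≤ hgt p (u - v) := by
  have := min_le_hgt_add p u (-v)
  rwa [hgt_neg, ← sub_eq_add_neg] at this

lemma hgt_le_nsmul (hTF : IsTorsionFreeGrp G) {p : ℕ} (hp : p.Prime) {s : ℕ}
    (hs : s ≠ 0) (y : G) : hgt p y ≤ hgt p (s • y) := by
  rw [hgt_nsmul_eq hTF hp hs]; exact le_self_add

lemma complete_pass (hTF : IsTorsionFreeGrp G) (A : Set I) (Tg : ℕ → I)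
    (hTg : Function.Injective Tg) (hTgA : ∀ n, Tg n ∉ A) (x : I → G) :
    ∃ Θ : (I → G) ≃+ (I → G),
      ∀ (p m : ℕ), p.Prime → hgt p (x : I → G) = (m : ℕ∞) →
        ∃ i, i ∉ A ∧ hgt p (Θ x i) = (m : ℕ∞) := by
  classical
  set acted : ℕ → Prop := fun p =>
    p.Prime ∧ ∃ m : ℕ, hgt p (x : I → G) = (m : ℕ∞) ∧ ∃ w ∈ A, hgt p (x w) = (m : ℕ∞)
    with hacted
  have hdata : ∀ p : ℕ, ∃ ws : I × ℕ, acted p → (ws.1 ∈ A ∧ ws.2 ≠ 0 ∧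
      ∀ m : ℕ, hgt p (x : I → G) = (m : ℕ∞) →
        hgt p (x (Tg p) + ws.2 • x ws.1) = (m : ℕ∞)) := by
    intro p
    by_cases hap : acted p
    · obtain ⟨hp, m, hm, w, hwA, hw⟩ := hap
      have hge : (m : ℕ∞) ≤ hgt p (x (Tg p)) := hm ▸ hgt_pi_le p x (Tg p)
      have hmuniq : ∀ m' : ℕ, hgt p (x : I → G) = (m' : ℕ∞) → m' = m := by
        intro m' hm'
        have : ((m' : ℕ) : ℕ∞) = (m : ℕ∞) := by rw [← hm', hm]
        exact_mod_cast this
      rcases strick hw hge with hs | hs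
      · refine ⟨(w, 1), fun _ => ⟨hwA, one_ne_zero, fun m' hm' => ?_⟩⟩
        rw [hmuniq m' hm']
        simpa using hs
      · refine ⟨(w, 2), fun _ => ⟨hwA, two_ne_zero, fun m' hm' => ?_⟩⟩
        rw [hmuniq m' hm']
        exact hs
    · exact ⟨(Tg 0, 1), fun h => absurd h hap⟩
  choose ws hws using hdata
  set T : (I → G) →+ (I → G) := {
    toFun := fun z => fun i =>
      if h : ∃ p, acted p ∧ Tg p = i then ((ws h.choose).2) • z ((ws h.choose).1) else 0
    map_zero' := by
      funext i
      by_cases h : ∃ p, acted p ∧ Tg p = i <;> simp [h]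
    map_add' := fun u v => by
      funext i
      by_cases h : ∃ p, acted p ∧ Tg p = i <;> simp [h, smul_add] } with hT
  have hTval : ∀ (z : I → G) (i : I), T z i =
      if h : ∃ p, acted p ∧ Tg p = i then ((ws h.choose).2) • z ((ws h.choose).1) else 0 := by
    intro z i; rfl
  have hTA : ∀ (z : I → G) (i : I), i ∈ A → T z i = 0 := by
    intro z i hiA
    rw [hTval]
    have : ¬ ∃ p, acted p ∧ Tg p = i := by
      rintro ⟨p, _, rfl⟩
      exact hTgA p hiA
    simp [this]
  have hTsq : ∀ z, T (T z) = 0 := by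
    intro z
    funext i
    rw [hTval]
    by_cases h : ∃ p, acted p ∧ Tg p = i
    · rw [dif_pos h]
      have hmem : (ws h.choose).1 ∈ A := (hws h.choose h.choose_spec.1).1
      rw [hTA z _ hmem, smul_zero]
      rfl
    · rw [dif_neg h]; rfl
  refine ⟨shear T hTsq, ?_⟩
  intro p m hp hm
  have hval : ∀ i, shear T hTsq x i = x i + T x i := fun i => rfl
  by_cases hap : acted p
  · refine ⟨Tg p, hTgA p, ?_⟩
    have hcond : ∃ q, acted q ∧ Tg q = Tg p := ⟨p, hap, rfl⟩
    have hcq : hcond.choose = p := hTg hcond.choose_spec.2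
    rw [hval, hTval]
    rw [dif_pos hcond, hcq]
    exact (hws p hap).2.2 m hm
  · obtain ⟨b, hb⟩ := hgt_pi_attained hm
    have hbA : b ∉ A := by
      intro hbA
      exact hap ⟨hp, m, hm, b, hbA, hb⟩
    have hnowit : ∀ w ∈ A, hgt p (x w) ≠ (m : ℕ∞) := by
      intro w hwA hw
      exact hap ⟨hp, m, hm, w, hwA, hw⟩
    refine ⟨b, hbA, ?_⟩
    rw [hval, hTval]
    by_cases hcond : ∃ q, acted q ∧ Tg q = b
    · rw [dif_pos hcond]
      set q := hcond.choose with hq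
      have hqa : acted q := hcond.choose_spec.1
      have hwA : (ws q).1 ∈ A := (hws q hqa).1
      have hs0 : (ws q).2 ≠ 0 := (hws q hqa).2.1
      have hgtw : (m : ℕ∞) < hgt p (x ((ws q).1)) := by
        refine lt_of_le_of_ne ?_ (Ne.symm (hnowit _ hwA))
        exact hm ▸ hgt_pi_le p x ((ws q).1)
      have hlt : hgt p (x b) < hgt p ((ws q).2 • x ((ws q).1)) := by
        rw [hb]
        exact lt_of_lt_of_le hgtw (hgt_le_nsmul hTF hp hs0 _)
      rw [hgt_add_eq_left hlt, hb]
    · rw [dif_neg hcond, add_zero, hb]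

lemma rewrite_pass (A : Set I) (x τ : I → G)
    (hcomp : ∀ (p m : ℕ), p.Prime → hgt p (x : I → G) = (m : ℕ∞) →
      ∃ i, i ∉ A ∧ hgt p (x i) = (m : ℕ∞))
    (hrow : ∀ a ∈ A, ∃ (F : Finset {i : I // i ∉ A}) (f : {i : I // i ∉ A} → (G →+ G)),
      (∑ b ∈ F, f b (x ↑b)) = τ a) :
    ∃ Θ : (I → G) ≃+ (I → G), ∀ i, Θ x i = if i ∈ A then x i + τ i else x i := by
  classical
  have hrow' : ∀ a : I, ∃ (F : Finset {i : I // i ∉ A}) (f : {i : I // i ∉ A} → (G →+ G)),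
      a ∈ A → (∑ b ∈ F, f b (x ↑b)) = τ a := by
    intro a
    by_cases ha : a ∈ A
    · obtain ⟨F, f, hFf⟩ := hrow a ha
      exact ⟨F, f, fun _ => hFf⟩
    · exact ⟨∅, 0, fun h => absurd h ha⟩
  choose Ffun ffun hFf using hrow'
  set T : (I → G) →+ (I → G) := {
    toFun := fun z => fun i =>
      if i ∈ A then ∑ b ∈ Ffun i, ffun i b (z ↑b) else 0
    map_zero' := by
      funext i
      by_cases h : i ∈ A <;> simp [h]
    map_add' := fun u v => by
      funext i
      by_cases h : i ∈ A
      · simp only [if_pos h, Pi.add_apply, map_add, Finset.sum_add_distrib]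
      · simp [h] } with hT
  have hTval : ∀ (z : I → G) (i : I), T z i =
      if i ∈ A then ∑ b ∈ Ffun i, ffun i b (z ↑b) else 0 := fun z i => rfl
  have hTsq : ∀ z, T (T z) = 0 := by
    intro z
    funext i
    rw [hTval]
    by_cases h : i ∈ A
    · rw [if_pos h]
      have : ∀ b ∈ Ffun i, ffun i b (T z ↑b) = 0 := by
        intro b _
        have : T z ↑b = 0 := by rw [hTval, if_neg b.2]
        rw [this, map_zero]
      rw [Finset.sum_congr rfl this]
      simp
    · rw [if_neg h]; rfl
  refine ⟨shear T hTsq, fun i => ?_⟩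
  have hval : shear T hTsq x i = x i + T x i := rfl
  rw [hval, hTval]
  by_cases h : i ∈ A
  · rw [if_pos h, if_pos h, hFf i h]
  · rw [if_neg h, if_neg h, add_zero]

end Passes

section Main
variable {I : Type*}
variable (hTF : IsTorsionFreeGrp G) (hhom : Homogeneous G) (ht : TransitiveGrp G)
include hTF hhom ht

lemma main_infinite [Infinite I] : TransitiveGrp (I → G) := by
  classical
  intro x y hxy
  rcases eq_or_ne x 0 with rfl | hx0
  · have hy : y = 0 := by
      funext i
      refine eq_zero_of_all_divides ht fun p k hp => ?_
      exact divides_pi.1 (hxy.1 p k hp ⟨0, smul_zero _⟩) i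
    exact ⟨AddEquiv.refl _, by rw [hy]; rfl⟩
  have hy0 : y ≠ 0 := by
    rintro rfl
    refine hx0 (funext fun i => ?_)
    refine eq_zero_of_all_divides ht fun p k hp => ?_
    exact divides_pi.1 (hxy.2 p k hp ⟨0, smul_zero _⟩) i
  set f : ℕ ↪ I := Infinite.natEmbedding I with hf
  set A : Set I := Set.range (fun n => f (2 * n)) with hA
  have hTgB : ∀ n, f (2 * n + 1) ∉ A := by
    rintro n ⟨m, hm⟩
    have := f.injective hm
    omega
  have hTgBinj : Function.Injective (fun n => f (2 * n + 1)) := by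
    intro a b hab
    have := f.injective hab; omega
  have hTgAinj : Function.Injective (fun n => f (2 * n)) := by
    intro a b hab
    have := f.injective hab; omega
  have hTgA : ∀ n, (fun n => f (2 * n)) n ∉ (Aᶜ : Set I) := by
    intro n h
    exact h ⟨n, rfl⟩
  obtain ⟨Θ₁, hΘ₁⟩ := complete_pass hTF A (fun n => f (2*n+1)) hTgBinj hTgB x
  obtain ⟨Θ₂, hΘ₂⟩ := complete_pass hTF (Aᶜ) (fun n => f (2*n)) hTgAinj hTgA y
  set x₁ := Θ₁ x with hx₁
  set y₁ := Θ₂ y with hy₁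
  have hhx : ∀ p : ℕ, hgt p (x₁ : I → G) = hgt p (x : I → G) := fun p => hgt_equiv Θ₁ p x
  have hhy : ∀ p : ℕ, hgt p (y₁ : I → G) = hgt p (y : I → G) := fun p => hgt_equiv Θ₂ p y
  have hxy' : ∀ p : ℕ, p.Prime → hgt p (x : I → G) = hgt p (y : I → G) :=
    heightEq_iff_hgt.1 hxy
  have hslotx : ∀ (i : I) (p : ℕ), hgt p (x : I → G) ≤ hgt p (x₁ i) := by
    intro i p
    rw [← hhx p]; exact hgt_pi_le p x₁ i
  have hsloty : ∀ (i : I) (p : ℕ), p.Prime → hgt p (x : I → G) ≤ hgt p (y₁ i) := by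
    intro i p hp
    rw [hxy' p hp, ← hhy p]; exact hgt_pi_le p y₁ i
  -- a nonzero slot of x₁ outside A
  have hbase1 : ∃ b : {i : I // i ∉ A}, x₁ (↑b) ≠ 0 := by
    obtain ⟨j, hj⟩ : ∃ j, x j ≠ 0 := by
      by_contra hc
      push_neg at hc
      exact hx0 (funext hc)
    obtain ⟨p, hp, hpt⟩ := exists_finite_hgt ht hj
    have hle : hgt p (x : I → G) ≤ hgt p (x j) := hgt_pi_le p x j
    obtain ⟨m, hm⟩ : ∃ m : ℕ, hgt p (x : I → G) = (m : ℕ∞) := by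
      cases h' : hgt p (x : I → G) with
      | top => exact absurd (top_le_iff.1 (h' ▸ hle)) hpt
      | coe m => exact ⟨m, rfl⟩
    obtain ⟨i, hiA, hi⟩ := hΘ₁ p m hp hm
    exact ⟨⟨i, hiA⟩, ne_zero_of_hgt_ne_top (p := p) (by rw [hi]; exact ENat.coe_ne_top m)⟩
  -- pass R1 : rewrite the A-part of x₁ into y₁
  have hrow1 : ∀ a ∈ A, ∃ (F : Finset {i : I // i ∉ A}) (ff : {i : I // i ∉ A} → (G →+ G)),
      (∑ b ∈ F, ff b (x₁ ↑b)) = y₁ a - x₁ a := by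
    intro a _
    obtain ⟨c, hc⟩ := hbase1
    refine row hTF hhom ht (fun b : {i : I // i ∉ A} => x₁ ↑b) (y₁ a - x₁ a) ?_ c hc
    refine heightLE_iff_hgt.2 fun p hp => ?_
    have htau : hgt p (x : I → G) ≤ hgt p (y₁ a - x₁ a) := by
      refine le_trans (le_min (hsloty a p hp) (hslotx a p)) ?_
      exact min_le_hgt_sub p (y₁ a) (x₁ a)
    cases h' : hgt p (y₁ a - x₁ a) with
    | top => exact le_top
    | coe mτ =>
      rw [h'] at htau
      obtain ⟨m, hm⟩ : ∃ m : ℕ, hgt p (x : I → G) = (m : ℕ∞) := by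
        cases h'' : hgt p (x : I → G) with
        | top => rw [h''] at htau; exact absurd (top_le_iff.1 htau) (ENat.coe_ne_top mτ)
        | coe m => exact ⟨m, rfl⟩
      obtain ⟨i, hiA, hi⟩ := hΘ₁ p m hp hm
      calc hgt p (fun b : {i : I // i ∉ A} => x₁ ↑b)
          ≤ hgt p (x₁ ↑(⟨i, hiA⟩ : {i : I // i ∉ A})) := hgt_pi_le p _ _
        _ = (m : ℕ∞) := hi
        _ ≤ (mτ : ℕ∞) := by rw [hm] at htau; exact htau
  obtain ⟨Θ₃, hΘ₃⟩ := rewrite_pass A x₁ (fun i => y₁ i - x₁ i)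
    (fun p m hp hm => hΘ₁ p m hp (by rw [← hhx p]; exact hm)) hrow1
  set x₂ := Θ₃ x₁ with hx₂
  have hx₂A : ∀ i ∈ A, x₂ i = y₁ i := by
    intro i hiA
    rw [hΘ₃ i, if_pos hiA]
    abel
  have hx₂B : ∀ i, i ∉ A → x₂ i = x₁ i := by
    intro i hiA
    rw [hΘ₃ i, if_neg hiA]
  have hhx₂ : ∀ p : ℕ, hgt p (x₂ : I → G) = hgt p (x : I → G) := by
    intro p
    rw [hx₂, hgt_equiv Θ₃ p x₁, hhx p]
  have hslotx₂ : ∀ (i : I) (p : ℕ), hgt p (x : I → G) ≤ hgt p (x₂ i) := by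
    intro i p
    rw [← hhx₂ p]; exact hgt_pi_le p x₂ i
  -- pass R2 : rewrite the Aᶜ-part of x₂ into y₁
  have hbase2 : ∃ b : {i : I // i ∉ (Aᶜ : Set I)}, x₂ (↑b) ≠ 0 := by
    obtain ⟨j, hj⟩ : ∃ j, y j ≠ 0 := by
      by_contra hc
      push_neg at hc
      exact hy0 (funext hc)
    obtain ⟨p, hp, hpt⟩ := exists_finite_hgt ht hj
    have hle : hgt p (y : I → G) ≤ hgt p (y j) := hgt_pi_le p y j
    obtain ⟨m, hm⟩ : ∃ m : ℕ, hgt p (y : I → G) = (m : ℕ∞) := by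
      cases h' : hgt p (y : I → G) with
      | top => exact absurd (top_le_iff.1 (h' ▸ hle)) hpt
      | coe m => exact ⟨m, rfl⟩
    obtain ⟨i, hiA, hi⟩ := hΘ₂ p m hp hm
    have hiA' : i ∈ A := not_not.1 hiA
    refine ⟨⟨i, by simp [hiA']⟩, ?_⟩
    rw [hx₂A i hiA']
    exact ne_zero_of_hgt_ne_top (p := p) (by rw [hi]; exact ENat.coe_ne_top m)
  have hrow2 : ∀ a ∈ (Aᶜ : Set I),
      ∃ (F : Finset {i : I // i ∉ (Aᶜ : Set I)}) (ff : {i : I // i ∉ (Aᶜ : Set I)} → (G →+ G)),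
      (∑ b ∈ F, ff b (x₂ ↑b)) = y₁ a - x₂ a := by
    intro a _
    obtain ⟨c, hc⟩ := hbase2
    refine row hTF hhom ht (fun b : {i : I // i ∉ (Aᶜ : Set I)} => x₂ ↑b) (y₁ a - x₂ a) ?_ c hc
    refine heightLE_iff_hgt.2 fun p hp => ?_
    have htau : hgt p (x : I → G) ≤ hgt p (y₁ a - x₂ a) := by
      refine le_trans (le_min (hsloty a p hp) (hslotx₂ a p)) ?_
      exact min_le_hgt_sub p (y₁ a) (x₂ a)
    cases h' : hgt p (y₁ a - x₂ a) with
    | top => exact le_top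
    | coe mτ =>
      rw [h'] at htau
      obtain ⟨m, hm⟩ : ∃ m : ℕ, hgt p (x : I → G) = (m : ℕ∞) := by
        cases h'' : hgt p (x : I → G) with
        | top => rw [h''] at htau; exact absurd (top_le_iff.1 htau) (ENat.coe_ne_top mτ)
        | coe m => exact ⟨m, rfl⟩
      have hmy : hgt p (y : I → G) = (m : ℕ∞) := by rw [← hxy' p hp]; exact hm
      obtain ⟨i, hiA, hi⟩ := hΘ₂ p m hp hmy
      have hiA' : i ∈ A := not_not.1 hiA
      have hx₂i : hgt p (x₂ i) = (m : ℕ∞) := by rw [hx₂A i hiA']; exact hi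
      calc hgt p (fun b : {i : I // i ∉ (Aᶜ : Set I)} => x₂ ↑b)
          ≤ hgt p (x₂ ↑(⟨i, by simp [hiA']⟩ : {i : I // i ∉ (Aᶜ : Set I)})) := hgt_pi_le p _ _
        _ = (m : ℕ∞) := hx₂i
        _ ≤ (mτ : ℕ∞) := by rw [hm] at htau; exact htau
  obtain ⟨Θ₄, hΘ₄⟩ := rewrite_pass (Aᶜ : Set I) x₂ (fun i => y₁ i - x₂ i)
    (fun p m hp hm => by
      have hmy : hgt p (y : I → G) = (m : ℕ∞) := by
        rw [← hxy' p hp, ← hhx₂ p]; exact hm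
      obtain ⟨i, hiA, hi⟩ := hΘ₂ p m hp hmy
      have hiA' : i ∈ A := not_not.1 hiA
      exact ⟨i, by simp [hiA'], by rw [hx₂A i hiA']; exact hi⟩) hrow2
  have hfinal : Θ₄ x₂ = y₁ := by
    funext i
    rw [hΘ₄ i]
    by_cases hiA : i ∈ A
    · rw [if_neg (by simp [hiA]), hx₂A i hiA]
    · rw [if_pos (by simp [hiA])]
      abel
  refine ⟨((Θ₁.trans Θ₃).trans Θ₄).trans Θ₂.symm, ?_⟩
  rw [AddEquiv.trans_apply, AddEquiv.trans_apply, AddEquiv.trans_apply]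
  rw [← hx₁, ← hx₂, hfinal, hy₁, AddEquiv.symm_apply_apply]

end Main

end
end Stmt7

theorem stmt_7 (G : Type*) [AddCommGroup G] (hTF : IsTorsionFreeGrp G)
    (hhom : Homogeneous G) (ht : TransitiveGrp G)
    (I : Type*) [Nontrivial I] : TransitiveGrp (I → G) := by
  classical
  cases finite_or_infinite I with
  | inl hfin =>
    haveI : Fintype I := Fintype.ofFinite I
    haveI : Nonempty I := Nontrivial.to_nonempty
    exact Stmt7.main_finite hTF hhom ht
  | inr hinf => exact Stmt7.main_infinite hTF hhom ht
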